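/- If G is a connected graph of order n ≥ 2 and α ∈ [1/2, 1], then the number of eigenvalues of A_α(G) in [α, Δ(G)], counted with multiplicity, is at least the edge covering number β(G). -/

import Mathlib

/-- The `A_α`-matrix of a graph: `α·D(G) + (1-α)·A(G)`. -/
noncomputable def Aalpha {n : ℕ} (α : ℝ) (G : SimpleGraph (Fin n)) [DecidableRel G.Adj] :
    Matrix (Fin n) (Fin n) ℝ :=
  α • Matrix.diagonal (fun v => (G.degree v : ℝ)) + (1 - α) • G.adjMatrix ℝ

lemma Aalpha_isHermitian {n : ℕ} (α : ℝ) (G : SimpleGraph (Fin n)) [DecidableRel G.Adj] :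
    (Aalpha α G).IsHermitian := by
  apply Matrix.IsHermitian.ext
  intro i j
  by_cases h : G.Adj i j <;> by_cases hij : i = j <;>
    simp_all [Aalpha, Matrix.diagonal_apply, SimpleGraph.adj_comm, eq_comm]


/-- `C` is an edge cover of `G`: a set of edges of `G` covering every vertex. -/
def IsEdgeCoverSet {n : ℕ} (G : SimpleGraph (Fin n)) (C : Finset (Sym2 (Fin n))) : Prop :=
  ↑C ⊆ G.edgeSet ∧ ∀ v : Fin n, ∃ e ∈ C, v ∈ e

section Aux

open Finset Matrix RealInnerProductSpace

lemma swap_sum' {n : ℕ} (P : Fin n → Fin n → Prop) [∀ u v, Decidable (P u v)]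
    (hP : ∀ u v, P u v → P v u) (f : Fin n → Fin n → ℝ) :
    ∑ u, ∑ v, (if P u v then f u v else 0) = ∑ u, ∑ v, (if P u v then f v u else 0) := by
  rw [Finset.sum_comm]
  refine Finset.sum_congr rfl fun u _ => Finset.sum_congr rfl fun v _ => ?_
  exact if_congr ⟨hP v u, hP u v⟩ rfl rfl

lemma cross_bounds' {n : ℕ} (P : Fin n → Fin n → Prop) [∀ u v, Decidable (P u v)]
    (hP : ∀ u v, P u v → P v u) (x : Fin n → ℝ) :
    |∑ u, ∑ v, (if P u v then x u * x v else 0)| ≤ ∑ u, ∑ v, (if P u v then x u ^ 2 else 0) := by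
  have hsw : ∑ u, ∑ v, (if P u v then x v ^ 2 else 0)
      = ∑ u, ∑ v, (if P u v then x u ^ 2 else 0) := (swap_sum' P hP _).symm
  have h1 : (0:ℝ) ≤ ∑ u, ∑ v, (if P u v then (x u - x v) ^ 2 else 0) :=
    Finset.sum_nonneg fun u _ => Finset.sum_nonneg fun v _ => by positivity
  have h2 : (0:ℝ) ≤ ∑ u, ∑ v, (if P u v then (x u + x v) ^ 2 else 0) :=
    Finset.sum_nonneg fun u _ => Finset.sum_nonneg fun v _ => by positivity
  have pt1 : ∀ u v : Fin n, (if P u v then (x u - x v) ^ 2 else 0)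
      = (if P u v then x u ^ 2 else 0) + (if P u v then x v ^ 2 else 0)
        - 2 * (if P u v then x u * x v else 0) := fun u v => by
    by_cases h : P u v <;> simp only [h, if_true, if_false] <;> ring
  have pt2 : ∀ u v : Fin n, (if P u v then (x u + x v) ^ 2 else 0)
      = (if P u v then x u ^ 2 else 0) + (if P u v then x v ^ 2 else 0)
        + 2 * (if P u v then x u * x v else 0) := fun u v => by
    by_cases h : P u v <;> simp only [h, if_true, if_false] <;> ring
  have e1 : ∑ u, ∑ v, (if P u v then (x u - x v) ^ 2 else 0)
      = ∑ u, ∑ v, (if P u v then x u ^ 2 else 0) + ∑ u, ∑ v, (if P u v then x v ^ 2 else 0)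
        - 2 * ∑ u, ∑ v, (if P u v then x u * x v else 0) := by
    simp only [pt1, Finset.sum_add_distrib, Finset.sum_sub_distrib, Finset.mul_sum]
  have e2 : ∑ u, ∑ v, (if P u v then (x u + x v) ^ 2 else 0)
      = ∑ u, ∑ v, (if P u v then x u ^ 2 else 0) + ∑ u, ∑ v, (if P u v then x v ^ 2 else 0)
        + 2 * ∑ u, ∑ v, (if P u v then x u * x v else 0) := by
    simp only [pt2, Finset.sum_add_distrib, Finset.mul_sum]
  rw [hsw] at e1 e2
  rw [abs_le]
  constructor <;> linarith

lemma Aalpha_quadform {n : ℕ} (α : ℝ) (G : SimpleGraph (Fin n)) [DecidableRel G.Adj]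
    (x : Fin n → ℝ) :
    x ⬝ᵥ (Aalpha α G).mulVec x
      = ∑ u, ∑ v, (if G.Adj u v then α * x u ^ 2 + (1 - α) * (x u * x v) else 0) := by
  have hdeg : ∀ u, (G.degree u : ℝ) = ∑ v, if G.Adj u v then (1:ℝ) else 0 := by
    intro u
    rw [SimpleGraph.degree, SimpleGraph.neighborFinset_eq_filter, Finset.card_filter]
    push_cast; rfl
  simp only [dotProduct, Matrix.mulVec, Aalpha, Matrix.add_apply, Matrix.smul_apply,
    Matrix.diagonal_apply, SimpleGraph.adjMatrix_apply, smul_eq_mul]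
  refine Finset.sum_congr rfl fun u _ => ?_
  rw [Finset.mul_sum]
  calc ∑ v, x u * (((α * if u = v then (G.degree u : ℝ) else 0)
          + (1 - α) * (if G.Adj u v then 1 else 0)) * x v)
      = ∑ v, ((if u = v then α * (G.degree u : ℝ) * (x u * x v) else 0)
          + (if G.Adj u v then (1 - α) * (x u * x v) else 0)) := by
        refine Finset.sum_congr rfl fun v _ => ?_
        by_cases h : u = v <;> by_cases h' : G.Adj u v <;> simp [h, h'] <;> ring
    _ = α * (G.degree u : ℝ) * (x u * x u)
          + ∑ v, (if G.Adj u v then (1 - α) * (x u * x v) else 0) := by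
        rw [Finset.sum_add_distrib, Finset.sum_ite_eq, if_pos (mem_univ u)]
    _ = ∑ v, (if G.Adj u v then α * x u ^ 2 + (1 - α) * (x u * x v) else 0) := by
        rw [hdeg, Finset.mul_sum, Finset.sum_mul, ← Finset.sum_add_distrib]
        refine Finset.sum_congr rfl fun v _ => ?_
        by_cases h' : G.Adj u v <;> simp only [h', if_true, if_false] <;> ring

/-- The quadratic form of `A_α` is at most `Δ ∑ x_v²`. -/
lemma Aalpha_form_le {n : ℕ} (α : ℝ) (G : SimpleGraph (Fin n)) [DecidableRel G.Adj]
    (hα0 : 1 / 2 ≤ α) (hα1 : α ≤ 1) (x : Fin n → ℝ) :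
    x ⬝ᵥ (Aalpha α G).mulVec x ≤ (G.maxDegree : ℝ) * ∑ v, x v ^ 2 := by
  rw [Aalpha_quadform]
  have hsplit : ∀ u v : Fin n,
      (if G.Adj u v then α * x u ^ 2 + (1 - α) * (x u * x v) else 0)
        = α * (if G.Adj u v then x u ^ 2 else 0)
          + (1 - α) * (if G.Adj u v then x u * x v else 0) := fun u v => by
    by_cases h : G.Adj u v <;> simp [h]
  have hcb := cross_bounds' G.Adj (fun u v h => h.symm) x
  rw [abs_le] at hcb
  have hS2 : ∑ u, ∑ v, (if G.Adj u v then x u ^ 2 else 0)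
      ≤ (G.maxDegree : ℝ) * ∑ v, x v ^ 2 := by
    have hdeg : ∀ u, (G.degree u : ℝ) = ∑ v, if G.Adj u v then (1:ℝ) else 0 := by
      intro u
      rw [SimpleGraph.degree, SimpleGraph.neighborFinset_eq_filter, Finset.card_filter]
      push_cast; rfl
    rw [Finset.mul_sum]
    refine Finset.sum_le_sum fun u _ => ?_
    have : ∑ v, (if G.Adj u v then x u ^ 2 else 0) = (G.degree u : ℝ) * x u ^ 2 := by
      rw [hdeg, Finset.sum_mul]
      refine Finset.sum_congr rfl fun v _ => ?_
      by_cases h : G.Adj u v <;> simp [h]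
    rw [this]
    have hle : (G.degree u : ℝ) ≤ (G.maxDegree : ℝ) := by
      exact_mod_cast G.degree_le_maxDegree u
    exact mul_le_mul_of_nonneg_right hle (by positivity)
  have hS2nonneg : (0:ℝ) ≤ ∑ u, ∑ v, (if G.Adj u v then x u ^ 2 else 0) :=
    Finset.sum_nonneg fun u _ => Finset.sum_nonneg fun v _ => by positivity
  calc ∑ u, ∑ v, (if G.Adj u v then α * x u ^ 2 + (1 - α) * (x u * x v) else 0)
      = α * (∑ u, ∑ v, (if G.Adj u v then x u ^ 2 else 0))
        + (1 - α) * (∑ u, ∑ v, (if G.Adj u v then x u * x v else 0)) := by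
        simp only [hsplit, Finset.sum_add_distrib, Finset.mul_sum]
    _ ≤ (G.maxDegree : ℝ) * ∑ v, x v ^ 2 := by nlinarith

/-- The quadratic form of `A_α` on a vector supported on `T` is at least `α ∑ x_v²`,
where `T` meets every edge of the cover `C` at most once and is covered by `C`. -/
lemma Aalpha_form_ge {n : ℕ} (α : ℝ) (G : SimpleGraph (Fin n)) [DecidableRel G.Adj]
    (hα0 : 1 / 2 ≤ α) (hα1 : α ≤ 1) (C : Finset (Sym2 (Fin n)))
    (hCsub : ↑C ⊆ G.edgeSet) (T : Finset (Fin n))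
    (hTcov : ∀ t ∈ T, ∃ u, s(t, u) ∈ C)
    (hT2 : ∀ u v : Fin n, s(u, v) ∈ C → u ∈ T → v ∈ T → False)
    (x : Fin n → ℝ) (hx : ∀ v, v ∉ T → x v = 0) :
    α * ∑ v, x v ^ 2 ≤ x ⬝ᵥ (Aalpha α G).mulVec x := by
  classical
  set R : Fin n → Fin n → Prop := fun u v => s(u, v) ∈ C with hR
  have hRsymm : ∀ u v, R u v → R v u := fun u v h => by
    show s(v, u) ∈ C
    rwa [Sym2.eq_swap]
  have hRadj : ∀ u v, R u v → G.Adj u v := fun u v h => hCsub h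
  have hP2symm : ∀ u v, (G.Adj u v ∧ ¬ R u v) → (G.Adj v u ∧ ¬ R v u) := by
    rintro u v ⟨h1, h2⟩
    exact ⟨h1.symm, fun h => h2 (hRsymm v u h)⟩
  rw [Aalpha_quadform]
  have hsplit : ∀ u v : Fin n,
      (if G.Adj u v then α * x u ^ 2 + (1 - α) * (x u * x v) else 0)
        = (if R u v then α * x u ^ 2 + (1 - α) * (x u * x v) else 0)
          + (if G.Adj u v ∧ ¬ R u v then α * x u ^ 2 + (1 - α) * (x u * x v) else 0) := by
    intro u v
    by_cases h1 : R u v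
    · simp [h1, hRadj u v h1]
    · by_cases h2 : G.Adj u v <;> simp [h1, h2]
  -- cross terms over R vanish
  have hRcross : ∀ u v : Fin n,
      (if R u v then α * x u ^ 2 + (1 - α) * (x u * x v) else 0)
        = (if R u v then α * x u ^ 2 else 0) := by
    intro u v
    by_cases h : R u v
    · have : x u * x v = 0 := by
        by_cases hu : u ∈ T
        · by_cases hv : v ∈ T
          · exact absurd (hT2 u v h hu hv) (by simp)
          · rw [hx v hv, mul_zero]
        · rw [hx u hu, zero_mul]
      simp [h, this]
    · simp [h]
  have hpart2 : (0:ℝ) ≤ ∑ u, ∑ v,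
      (if G.Adj u v ∧ ¬ R u v then α * x u ^ 2 + (1 - α) * (x u * x v) else 0) := by
    have hsplit2 : ∀ u v : Fin n,
        (if G.Adj u v ∧ ¬ R u v then α * x u ^ 2 + (1 - α) * (x u * x v) else 0)
          = α * (if G.Adj u v ∧ ¬ R u v then x u ^ 2 else 0)
            + (1 - α) * (if G.Adj u v ∧ ¬ R u v then x u * x v else 0) := fun u v => by
      by_cases h : G.Adj u v ∧ ¬ R u v <;> simp [h]
    have hcb := cross_bounds' (fun u v => G.Adj u v ∧ ¬ R u v) hP2symm x
    rw [abs_le] at hcb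
    have hS2nonneg : (0:ℝ) ≤ ∑ u, ∑ v, (if G.Adj u v ∧ ¬ R u v then x u ^ 2 else 0) :=
      Finset.sum_nonneg fun u _ => Finset.sum_nonneg fun v _ => by positivity
    calc (0:ℝ) ≤ α * (∑ u, ∑ v, (if G.Adj u v ∧ ¬ R u v then x u ^ 2 else 0))
        + (1 - α) * (∑ u, ∑ v, (if G.Adj u v ∧ ¬ R u v then x u * x v else 0)) := by nlinarith
      _ = _ := by simp only [hsplit2, Finset.sum_add_distrib, Finset.mul_sum]
  have hpart1 : α * ∑ v, x v ^ 2 ≤ ∑ u, ∑ v, (if R u v then α * x u ^ 2 else 0) := by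
    rw [Finset.mul_sum]
    refine Finset.sum_le_sum fun u _ => ?_
    by_cases hu : x u = 0
    · rw [hu]
      simp only [ne_eq, OfNat.ofNat_ne_zero, not_false_eq_true, zero_pow, mul_zero]
      exact Finset.sum_nonneg fun v _ => by positivity
    · have huT : u ∈ T := by by_contra h; exact hu (hx u h)
      obtain ⟨w, hw⟩ := hTcov u huT
      calc α * x u ^ 2 = (if R u w then α * x u ^ 2 else 0) := by rw [if_pos hw]
        _ ≤ ∑ v, (if R u v then α * x u ^ 2 else 0) := by
            refine Finset.single_le_sum (f := fun v => if R u v then α * x u ^ 2 else 0)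
              (fun v _ => ?_) (Finset.mem_univ w)
            by_cases h : R u v <;> simp [h] <;> positivity
  calc α * ∑ v, x v ^ 2 ≤ ∑ u, ∑ v, (if R u v then α * x u ^ 2 else 0) + 0 := by
        rw [add_zero]; exact hpart1
    _ ≤ ∑ u, ∑ v, (if R u v then α * x u ^ 2 + (1 - α) * (x u * x v) else 0)
        + ∑ u, ∑ v, (if G.Adj u v ∧ ¬ R u v then α * x u ^ 2 + (1 - α) * (x u * x v) else 0) := by
        refine add_le_add ?_ hpart2
        refine le_of_eq ?_
        simp only [hRcross]
    _ = _ := by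
        rw [← Finset.sum_add_distrib]
        refine Finset.sum_congr rfl fun u _ => ?_
        rw [← Finset.sum_add_distrib]
        exact Finset.sum_congr rfl fun v _ => (hsplit u v).symm

lemma Aalpha_eig_le {n : ℕ} (α : ℝ) (G : SimpleGraph (Fin n)) [DecidableRel G.Adj]
    (hα0 : 1 / 2 ≤ α) (hα1 : α ≤ 1) :
    ∀ i, (Aalpha_isHermitian α G).eigenvalues i ≤ (G.maxDegree : ℝ) := by
  intro i
  set hA := Aalpha_isHermitian α G with hAdef
  set b := hA.eigenvectorBasis with hbdef
  have hinner : ∀ x y : EuclideanSpace ℝ (Fin n), ⟪x, y⟫ = (⇑x : Fin n → ℝ) ⬝ᵥ ⇑y := by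
    intro x y
    simp [PiLp.inner_apply, dotProduct, mul_comm]
  have hmv := hA.mulVec_eigenvectorBasis i
  have hb1 : (⇑(b i) : Fin n → ℝ) ⬝ᵥ ⇑(b i) = 1 := by
    rw [← hinner]
    have := b.orthonormal.1 i
    rw [@real_inner_self_eq_norm_sq, this, one_pow]
  have hsq : ∑ v, ((⇑(b i) : Fin n → ℝ) v) ^ 2 = 1 := by
    rw [← hb1]; simp [dotProduct, sq]
  have hform := Aalpha_form_le α G hα0 hα1 ⇑(b i)
  rw [hmv, hsq, mul_one] at hform
  calc hA.eigenvalues i = hA.eigenvalues i * ((⇑(b i) : Fin n → ℝ) ⬝ᵥ ⇑(b i)) := by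
        rw [hb1, mul_one]
    _ = (⇑(b i) : Fin n → ℝ) ⬝ᵥ (hA.eigenvalues i • ⇑(b i)) := by
        rw [dotProduct_smul, smul_eq_mul]
    _ ≤ (G.maxDegree : ℝ) := hform

set_option maxHeartbeats 1000000 in
lemma Aalpha_key {n : ℕ} (α : ℝ) (G : SimpleGraph (Fin n)) [DecidableRel G.Adj]
    (hα0 : 1 / 2 ≤ α) (hα1 : α ≤ 1) (C : Finset (Sym2 (Fin n)))
    (hCsub : ↑C ⊆ G.edgeSet) (T : Finset (Fin n))
    (hTcov : ∀ t ∈ T, ∃ u, s(t, u) ∈ C)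
    (hT2 : ∀ u v : Fin n, s(u, v) ∈ C → u ∈ T → v ∈ T → False) :
    (Finset.univ.filter fun i : Fin n =>
      (Aalpha_isHermitian α G).eigenvalues i < α).card + T.card ≤ n := by
  classical
  set hA := Aalpha_isHermitian α G with hAdef
  set b := hA.eigenvectorBasis with hbdef
  set N : Finset (Fin n) := Finset.univ.filter (fun i => hA.eigenvalues i < α) with hNdef
  by_contra hcon
  push_neg at hcon
  have hinner : ∀ x y : EuclideanSpace ℝ (Fin n), ⟪x, y⟫ = (⇑x : Fin n → ℝ) ⬝ᵥ ⇑y := by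
    intro x y; simp [PiLp.inner_apply, dotProduct, mul_comm]
  set W : Submodule ℝ (EuclideanSpace ℝ (Fin n)) :=
    Submodule.span ℝ (Set.range fun i : {i : Fin n // i ∈ N} => b i.1) with hWdef
  set U : Submodule ℝ (EuclideanSpace ℝ (Fin n)) :=
    Submodule.span ℝ (Set.range fun t : {t : Fin n // t ∈ T} =>
      EuclideanSpace.single (t.1 : Fin n) (1:ℝ)) with hUdef
  have hWrank : Module.finrank ℝ W = N.card := by
    have hli : LinearIndependent ℝ (fun i : {i : Fin n // i ∈ N} => b i.1) :=
      (b.orthonormal.linearIndependent).comp _ Subtype.val_injective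
    rw [hWdef, finrank_span_eq_card hli]
    exact Fintype.card_coe N
  have hUorth : Orthonormal ℝ (fun t : {t : Fin n // t ∈ T} =>
      EuclideanSpace.single (t.1 : Fin n) (1:ℝ)) := by
    have h := (EuclideanSpace.basisFun (Fin n) ℝ).orthonormal
    have h2 := h.comp (fun t : {t : Fin n // t ∈ T} => t.1) Subtype.val_injective
    simpa [Function.comp_def, EuclideanSpace.basisFun_apply] using h2
  have hUrank : Module.finrank ℝ U = T.card := by
    rw [hUdef, finrank_span_eq_card hUorth.linearIndependent]
    exact Fintype.card_coe T
  have hsum := Submodule.finrank_sup_add_finrank_inf_eq W U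
  have hle : Module.finrank ℝ ↥(W ⊔ U) ≤ n := by
    calc Module.finrank ℝ ↥(W ⊔ U)
        ≤ Module.finrank ℝ (EuclideanSpace ℝ (Fin n)) := Submodule.finrank_le _
      _ = n := finrank_euclideanSpace_fin
  have hpos : 0 < Module.finrank ℝ ↥(W ⊓ U) := by omega
  have hnebot : W ⊓ U ≠ ⊥ := by
    intro hbot
    rw [hbot, finrank_bot] at hpos
    exact lt_irrefl 0 hpos
  obtain ⟨x, hxWU, hx0⟩ := Submodule.exists_mem_ne_zero_of_ne_bot hnebot
  have hxW : x ∈ W := (Submodule.mem_inf.1 hxWU).1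
  have hxU : x ∈ U := (Submodule.mem_inf.1 hxWU).2
  -- x is supported on T
  have hsupp : ∀ v, v ∉ T → x v = 0 := by
    intro v hv
    have hgen : ∀ y ∈ U, (y : EuclideanSpace ℝ (Fin n)) v = 0 := by
      intro y hy
      rw [hUdef] at hy
      induction hy using Submodule.span_induction with
      | mem y hy =>
        obtain ⟨t, rfl⟩ := hy
        have hne : v ≠ (t.1 : Fin n) := fun h => hv (h ▸ t.2)
        simp [EuclideanSpace.single_apply, hne]
      | zero => rfl
      | add y z hy hz ihy ihz => rw [PiLp.add_apply, ihy, ihz, add_zero]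
      | smul c y hy ihy => rw [PiLp.smul_apply, ihy, smul_zero]
    exact hgen x hxU
  set c : Fin n → ℝ := fun i => ⟪b i, x⟫ with hcdef
  have hxrepr : ∑ i, c i • b i = x := b.sum_repr' x
  have hcN : ∀ i, i ∉ N → c i = 0 := by
    intro i hi
    have hgen : ∀ y ∈ W, ⟪b i, y⟫ = (0:ℝ) := by
      intro y hy
      rw [hWdef] at hy
      induction hy using Submodule.span_induction with
      | mem y hy =>
        obtain ⟨j, rfl⟩ := hy
        exact b.orthonormal.2 (fun h : i = j.1 => hi (h ▸ j.2))
      | zero => exact inner_zero_right _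
      | add y z hy hz ihy ihz => rw [inner_add_right, ihy, ihz, add_zero]
      | smul a y hy ihy => rw [inner_smul_right, ihy, mul_zero]
    exact hgen x hxW
  set L := Matrix.toEuclideanLin (Aalpha α G) with hLdef
  have hLb : ∀ i, L (b i) = hA.eigenvalues i • b i := by
    intro i
    have hmv := hA.mulVec_eigenvectorBasis i
    apply (WithLp.equiv 2 (Fin n → ℝ)).injective
    simp only [hLdef, Matrix.toEuclideanLin_apply, Equiv.apply_symm_apply]
    rw [hmv]; rfl
  have hLx : L x = ∑ i, (c i * hA.eigenvalues i) • b i := by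
    conv_lhs => rw [← hxrepr]
    rw [map_sum]
    refine Finset.sum_congr rfl fun i _ => ?_
    rw [_root_.map_smul, hLb, smul_smul]
  have hQ1 : ⟪x, L x⟫ = ∑ i, c i * (c i * hA.eigenvalues i) := by
    conv_lhs => rw [hLx, ← hxrepr]
    simpa using b.orthonormal.inner_sum c (fun i => c i * hA.eigenvalues i) Finset.univ
  have hPars : ⟪x, x⟫ = ∑ i, c i * c i := by
    conv_lhs => rw [← hxrepr]
    simpa using b.orthonormal.inner_sum c c Finset.univ
  have hcoeL : (⇑(L x) : Fin n → ℝ) = (Aalpha α G).mulVec ⇑x := by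
    simp [hLdef, Matrix.toEuclideanLin_apply]
  have hformge := Aalpha_form_ge α G hα0 hα1 C hCsub T hTcov hT2 ⇑x hsupp
  have hxx : ∑ v, ((⇑x : Fin n → ℝ) v) ^ 2 = ∑ i, c i * c i := by
    rw [← hPars, hinner]
    simp [dotProduct, sq]
  have hQeq : (⇑x : Fin n → ℝ) ⬝ᵥ (Aalpha α G).mulVec ⇑x
      = ∑ i, c i * (c i * hA.eigenvalues i) := by
    rw [← hcoeL, ← hinner, hQ1]
  have hex : ∃ i ∈ N, c i ≠ 0 := by
    by_contra hall
    push_neg at hall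
    have hzero : ∀ i, c i = 0 := fun i => by
      by_cases h : i ∈ N
      · exact hall i h
      · exact hcN i h
    apply hx0
    rw [← hxrepr]
    simp [hzero]
  obtain ⟨i0, hi0N, hi0⟩ := hex
  have hsum_lt : ∑ i ∈ N, hA.eigenvalues i * (c i) ^ 2 < ∑ i ∈ N, α * (c i) ^ 2 := by
    refine Finset.sum_lt_sum (fun i hi => ?_) ⟨i0, hi0N, ?_⟩
    · have hlt : hA.eigenvalues i < α := (Finset.mem_filter.1 hi).2
      nlinarith [sq_nonneg (c i)]
    · have hlt : hA.eigenvalues i0 < α := (Finset.mem_filter.1 hi0N).2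
      have h0 : 0 < (c i0) ^ 2 := by positivity
      nlinarith
  have hfull1 : ∑ i, c i * (c i * hA.eigenvalues i) = ∑ i ∈ N, hA.eigenvalues i * (c i) ^ 2 := by
    rw [← Finset.sum_subset (Finset.subset_univ N) (fun i _ hi => by rw [hcN i hi]; ring)]
    exact Finset.sum_congr rfl fun i _ => by ring
  have hfull2 : ∑ i ∈ N, α * (c i) ^ 2 ≤ α * ∑ i, c i * c i := by
    have h1 : ∑ i ∈ N, α * (c i) ^ 2 ≤ ∑ i, α * (c i) ^ 2 :=
      Finset.sum_le_sum_of_subset_of_nonneg (Finset.subset_univ N)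
        (fun i _ _ => by positivity)
    have h2 : ∑ i, α * (c i) ^ 2 = α * ∑ i, c i * c i := by
      rw [Finset.mul_sum]
      exact Finset.sum_congr rfl fun i _ => by ring
    linarith
  rw [hxx, hQeq] at hformge
  linarith

end Aux

open Finset in
/-- If `G` is connected of order `n ≥ 2` and `α ∈ [1/2, 1]`, then the number of
eigenvalues of `A_α(G)` in `[α, Δ(G)]` (with multiplicity) is at least the edge covering
number `β(G)`. -/
theorem Aalpha_count_ge_edge_cover (n : ℕ) (hn : 2 ≤ n)
    (G : SimpleGraph (Fin n)) [DecidableRel G.Adj] (hconn : G.Connected)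
    (α : ℝ) (hα0 : 1 / 2 ≤ α) (hα1 : α ≤ 1)
    (β : ℕ) (hβ : IsLeast {k | ∃ C : Finset (Sym2 (Fin n)), IsEdgeCoverSet G C ∧ C.card = k} β) :
    β ≤ (univ.filter fun i : Fin n =>
        α ≤ (Aalpha_isHermitian α G).eigenvalues i ∧
          (Aalpha_isHermitian α G).eigenvalues i ≤ (G.maxDegree : ℝ)).card := by
  classical
  open Matrix RealInnerProductSpace in
  obtain ⟨⟨C, ⟨hCsub, hCcov⟩, hCcard⟩, hmin⟩ := hβ
  -- every edge of a minimum edge cover has a private endpoint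
  have hpriv : ∀ e ∈ C, ∃ v, v ∈ e ∧ ∀ e' ∈ C, v ∈ e' → e' = e := by
    intro e he
    by_contra hcon
    push_neg at hcon
    have hcov' : IsEdgeCoverSet G (C.erase e) := by
      constructor
      · refine Set.Subset.trans ?_ hCsub
        exact_mod_cast Finset.erase_subset e C
      · intro v
        obtain ⟨e₀, he₀, hv⟩ := hCcov v
        by_cases h : e₀ = e
        · subst h
          obtain ⟨e', he', hv', hne⟩ := hcon v hv
          exact ⟨e', Finset.mem_erase.2 ⟨hne, he'⟩, hv'⟩
        · exact ⟨e₀, Finset.mem_erase.2 ⟨h, he₀⟩, hv⟩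
    have h1 : β ≤ (C.erase e).card := hmin ⟨C.erase e, hcov', rfl⟩
    have h2 : (C.erase e).card < C.card := Finset.card_erase_lt_of_mem he
    omega
  choose f hf1 hf2 using hpriv
  set T : Finset (Fin n) := Finset.image (fun e : {e // e ∈ C} => f e.1 e.2) C.attach with hT
  have hTcard : T.card = β := by
    rw [hT, Finset.card_image_of_injective _ ?_, Finset.card_attach, hCcard]
    intro e1 e2 h
    simp only at h
    have h2 := hf2 e1.1 e1.2 e2.1 e2.2 (by rw [h]; exact hf1 e2.1 e2.2)
    exact Subtype.ext h2.symm
  have hTcov : ∀ t ∈ T, ∃ u, s(t, u) ∈ C := by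
    intro t ht
    obtain ⟨e, he, rfl⟩ := Finset.mem_image.1 ht
    obtain ⟨u, hu⟩ := Sym2.mem_iff_exists.1 (hf1 e.1 e.2)
    exact ⟨u, hu ▸ e.2⟩
  have hT2 : ∀ u v : Fin n, s(u, v) ∈ C → u ∈ T → v ∈ T → False := by
    intro u v he hu hv
    have hne : u ≠ v := (G.ne_of_adj (hCsub he))
    obtain ⟨e1, _, hu1⟩ := Finset.mem_image.1 hu
    obtain ⟨e2, _, hv2⟩ := Finset.mem_image.1 hv
    have h1 : s(u, v) = e1.1 := hf2 e1.1 e1.2 (s(u, v)) he (by rw [hu1]; exact Sym2.mem_mk_left u v)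
    have h2 : s(u, v) = e2.1 := hf2 e2.1 e2.2 (s(u, v)) he (by rw [hv2]; exact Sym2.mem_mk_right u v)
    have : e1 = e2 := Subtype.ext (h1 ▸ h2)
    rw [this, hv2] at hu1
    exact hne hu1.symm
  have heigle := Aalpha_eig_le α G hα0 hα1
  have key := Aalpha_key α G hα0 hα1 C hCsub T hTcov hT2
  have hβn : β ≤ n := by
    calc β = T.card := hTcard.symm
      _ ≤ Fintype.card (Fin n) := Finset.card_le_univ T
      _ = n := Fintype.card_fin n
  rw [hTcard] at key
  have hfilter : (Finset.univ.filter fun i : Fin n =>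
      α ≤ (Aalpha_isHermitian α G).eigenvalues i ∧
        (Aalpha_isHermitian α G).eigenvalues i ≤ (G.maxDegree : ℝ))
      = Finset.univ \ (Finset.univ.filter fun i : Fin n =>
          (Aalpha_isHermitian α G).eigenvalues i < α) := by
    ext i
    simp only [Finset.mem_filter, Finset.mem_sdiff, Finset.mem_univ, true_and, not_lt]
    constructor
    · rintro ⟨h1, _⟩; exact h1
    · intro h1; exact ⟨h1, heigle i⟩
  rw [hfilter, Finset.card_sdiff_of_subset (Finset.filter_subset _ _)]
  have huniv : (Finset.univ : Finset (Fin n)).card = n := by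
    rw [Finset.card_univ, Fintype.card_fin]
  rw [huniv]
  have hNle := Finset.card_le_univ (Finset.univ.filter fun i : Fin n =>
    (Aalpha_isHermitian α G).eigenvalues i < α)
  rw [Fintype.card_fin] at hNle
  omega
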